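/- Let Σ be an alphabet, 𝕄 = (M,+,val,𝟘) a timed valuation monoid, 𝓛 ⊆ 𝕋Σ⁺ a sequentially recognizable timed language and r : 𝕋Σ⁺ → M a sequentially recognizable quantitative timed language over 𝕄. Then the quantitative timed language r ∩ 𝓛 is sequentially recognizable over 𝕄. -/

import Mathlib

open scoped NNReal Classical

/-! # Core definitions: timed automata and weighted timed automata -/

/-- Comparison operators ⋈ ∈ {<, ≤, =, ≥, >}. -/
inductive Cmp : Type
  | lt | le | eq | ge | gt
  deriving DecidableEq

/-- Evaluation of a comparison `r ⋈ c` for `r ∈ ℝ≥0` and `c ∈ ℕ`. -/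
def Cmp.eval : Cmp → ℝ≥0 → ℕ → Prop
  | .lt, r, c => r < (c : ℝ≥0)
  | .le, r, c => r ≤ (c : ℝ≥0)
  | .eq, r, c => r = (c : ℝ≥0)
  | .ge, r, c => (c : ℝ≥0) ≤ r
  | .gt, r, c => (c : ℝ≥0) < r

/-- Clock constraints over a set `C` of clocks: `True` or conjunctions of `x ⋈ c`. -/
inductive ClockConstraint (C : Type) : Type
  | tt : ClockConstraint C
  | atom : C → Cmp → ℕ → ClockConstraint C
  | conj : ClockConstraint C → ClockConstraint C → ClockConstraint C

/-- A clock valuation assigns a non-negative real to each clock. -/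
def ClockVal (C : Type) : Type := C → ℝ≥0

/-- Satisfaction of clock constraints. -/
def ClockConstraint.Sat {C : Type} (ν : ClockVal C) : ClockConstraint C → Prop
  | .tt => True
  | .atom x op c => op.eval (ν x) c
  | .conj φ ψ => φ.Sat ν ∧ ψ.Sat ν

/-- `ν + t`: add `t` to every clock. -/
def ClockVal.add {C : Type} (ν : ClockVal C) (t : ℝ≥0) : ClockVal C := fun x => ν x + t

/-- `ν[Λ := 0]`: reset the clocks in `Λ` to `0`. -/
noncomputable def ClockVal.reset {C : Type} (ν : ClockVal C) (Λ : Set C) : ClockVal C :=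
  fun x => if x ∈ Λ then 0 else ν x

/-- The clock valuation assigning `0` to every clock. -/
def ClockVal.zero {C : Type} : ClockVal C := fun _ => 0

/-- An edge of a timed automaton: an element of `L × Σ × Φ(C) × 2^C × L`. -/
structure Edge (L A C : Type) : Type where
  src : L
  label : A
  guard : ClockConstraint C
  reset : Set C
  dst : L

/-- A timed automaton over the alphabet `A`. -/
structure TimedAutomaton (A : Type) : Type 1 where
  L : Type
  C : Type
  finL : Finite L
  finC : Finite C
  I : Set L
  F : Set L
  E : Set (Edge L A C)
  finE : E.Finite

/-- A (non-empty finite) timed word over `A`. -/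
abbrev TimedWord (A : Type) : Type := { w : List (A × ℝ≥0) // w ≠ [] }

/-- `T.IsRunFrom ℓ ν w es` holds iff `es` is the sequence of edges of a run of `T`
reading the timed word `w`, starting in location `ℓ` with clock valuation `ν`,
and ending in a final location. -/
def TimedAutomaton.IsRunFrom {A : Type} (T : TimedAutomaton A) :
    T.L → ClockVal T.C → List (A × ℝ≥0) → List (Edge T.L A T.C) → Prop
  | ℓ, _, [], [] => ℓ ∈ T.F
  | ℓ, ν, (a, t) :: w, e :: es =>
      e ∈ T.E ∧ e.src = ℓ ∧ e.label = a ∧ e.guard.Sat (ν.add t) ∧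
      T.IsRunFrom e.dst ((ν.add t).reset e.reset) w es
  | _, _, [], _ :: _ => False
  | _, _, _ :: _, [] => False

/-- `Run_T(w)`: the set of runs (identified with their edge sequences) of `T` on `w`. -/
def TimedAutomaton.RunOn {A : Type} (T : TimedAutomaton A) (w : TimedWord A) :
    Set (List (Edge T.L A T.C)) :=
  { es | ∃ ℓ₀ ∈ T.I, T.IsRunFrom ℓ₀ ClockVal.zero w.1 es }

/-- `L(T)`: the timed language accepted by `T`. -/
def TimedAutomaton.Lang {A : Type} (T : TimedAutomaton A) : Set (TimedWord A) :=
  { w | (T.RunOn w).Nonempty }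

/-- A timed automaton is unambiguous if every timed word has at most one run. -/
def TimedAutomaton.Unambiguous {A : Type} (T : TimedAutomaton A) : Prop :=
  ∀ w : TimedWord A, (T.RunOn w).Subsingleton

/-- A timed automaton is deterministic if it has a single initial location and the guards of
any two distinct edges with the same source and label are jointly unsatisfiable. -/
def TimedAutomaton.Deterministic {A : Type} (T : TimedAutomaton A) : Prop :=
  (∃ ℓ, T.I = {ℓ}) ∧
  ∀ e₁ ∈ T.E, ∀ e₂ ∈ T.E, e₁.src = e₂.src → e₁.label = e₂.label → e₁ ≠ e₂ →
    ∀ ν : ClockVal T.C, ¬ (e₁.guard.Sat ν ∧ e₂.guard.Sat ν)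

/-- A timed automaton is sequential if it has a single initial location and any two edges
with the same source and label are equal. -/
def TimedAutomaton.Sequential {A : Type} (T : TimedAutomaton A) : Prop :=
  (∃ ℓ, T.I = {ℓ}) ∧
  ∀ e₁ ∈ T.E, ∀ e₂ ∈ T.E, e₁.src = e₂.src → e₁.label = e₂.label → e₁ = e₂

/-- A timed language is recognizable by a timed automaton satisfying `P`. -/
def TLRecognizableBy {A : Type} (P : TimedAutomaton A → Prop) (𝓛 : Set (TimedWord A)) : Prop :=
  ∃ T : TimedAutomaton A, P T ∧ T.Lang = 𝓛

/-- A weighted timed automaton over the alphabet `A` and (the domain `M` of) a timed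
valuation monoid: a timed automaton together with weights on locations and edges.
The timed valuation monoid itself is given by an `AddCommMonoid M` instance together with a
timed valuation function `val : List ((M × M) × ℝ≥0) → M` (only its values on non-empty
lists, i.e. on `𝕋(M×M)⁺`, ever matter). -/
structure WTA (A M : Type) extends TimedAutomaton A where
  wtL : L → M
  wtE : Edge L A C → M

/-- The timed word `wt♯(ρ) ∈ 𝕋(M×M)⁺` associated with a run: the `i`-th letter is
`((wt(ℓ_{i-1}), wt(e_i)), t_i)`, where `ℓ_{i-1}` is the source location of edge `e_i`. -/
def WTA.runWord {A M : Type} (W : WTA A M) (w : List (A × ℝ≥0))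
    (es : List (Edge W.L A W.C)) : List ((M × M) × ℝ≥0) :=
  List.zipWith (fun (p : A × ℝ≥0) e => ((W.wtL e.src, W.wtE e), p.2)) w es

/-- The behavior `‖W‖ : 𝕋A⁺ → M` of a WTA: `‖W‖(w) = Σ (val(wt♯(ρ)) : ρ ∈ Run_W(w))`,
the empty sum being `0` (the monoid unit `𝟘`). -/
noncomputable def WTA.behavior {A M : Type} [AddCommMonoid M]
    (val : List ((M × M) × ℝ≥0) → M) (W : WTA A M) (w : TimedWord A) : M :=
  ∑ᶠ es ∈ W.toTimedAutomaton.RunOn w, val (W.runWord w.1 es)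

/-- A quantitative timed language `r : 𝕋A⁺ → M` is recognizable over the timed valuation
monoid `(M, +, val, 𝟘)` by a WTA whose underlying timed automaton satisfies `P`. -/
def QTLRecognizableBy {A M : Type} [AddCommMonoid M] (val : List ((M × M) × ℝ≥0) → M)
    (P : TimedAutomaton A → Prop) (r : TimedWord A → M) : Prop :=
  ∃ W : WTA A M, P W.toTimedAutomaton ∧ ∀ w, W.behavior val w = r w

/-- Recognizability (no restriction on the underlying timed automaton). -/
def QTLRecognizable {A M : Type} [AddCommMonoid M] (val : List ((M × M) × ℝ≥0) → M)
    (r : TimedWord A → M) : Prop :=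
  ∃ W : WTA A M, ∀ w, W.behavior val w = r w

/-- Renaming of timed words along `h : Γ → A`. -/
def mapTimedWord {Γ A : Type} (h : Γ → A) (v : TimedWord Γ) : TimedWord A :=
  ⟨v.1.map (fun p => (h p.1, p.2)), by
    cases v with
    | mk l hl => cases l with
      | nil => exact absurd rfl hl
      | cons p l => simp⟩

/-- `h(r)(w) = Σ (r(v) : v ∈ 𝕋Γ⁺, h(v) = w)` (a finite sum when `Γ` is finite). -/
noncomputable def pushQTL {Γ A M : Type} [AddCommMonoid M] (h : Γ → A)
    (r : TimedWord Γ → M) (w : TimedWord A) : M :=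
  ∑ᶠ v ∈ { v : TimedWord Γ | mapTimedWord h v = w }, r v

/-- `(val ∘ g)(w) = val((g(a₁),t₁)…(g(aₙ),tₙ))`. -/
def valComp {A M : Type} (val : List ((M × M) × ℝ≥0) → M) (g : A → M × M)
    (w : TimedWord A) : M :=
  val (w.1.map (fun p => (g p.1, p.2)))

/-- The intersection `r ∩ 𝓛` of a quantitative timed language with a timed language. -/
noncomputable def interQTL {A M : Type} [Zero M] (r : TimedWord A → M)
    (𝓛 : Set (TimedWord A)) (w : TimedWord A) : M :=
  if w ∈ 𝓛 then r w else 0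

/-- Membership in the Nivat class `N^P(A, 𝕄)`: `𝕃 = h((val ∘ g) ∩ 𝓛)` for some alphabet `Γ`,
maps `h : Γ → A`, `g : Γ → M × M` and a timed language `𝓛` recognizable by a timed
automaton satisfying `P`. -/
def NivatMem {A M : Type} [AddCommMonoid M] (val : List ((M × M) × ℝ≥0) → M)
    (P : ∀ {Γ : Type}, TimedAutomaton Γ → Prop) (𝕃 : TimedWord A → M) : Prop :=
  ∃ (Γ : Type) (_ : Finite Γ) (_ : Nonempty Γ) (h : Γ → A) (g : Γ → M × M)
    (𝓛 : Set (TimedWord Γ)),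
      TLRecognizableBy P 𝓛 ∧ ∀ w, 𝕃 w = pushQTL h (interQTL (valComp val g) 𝓛) w

/-- Membership in the class `H^P(A, 𝕄)`: `𝕃 = h(r)` for some alphabet `Γ`, `h : Γ → A`
and a quantitative timed language `r` recognizable by a WTA whose underlying timed
automaton satisfies `P`. -/
def HMem {A M : Type} [AddCommMonoid M] (val : List ((M × M) × ℝ≥0) → M)
    (P : ∀ {Γ : Type}, TimedAutomaton Γ → Prop) (𝕃 : TimedWord A → M) : Prop :=
  ∃ (Γ : Type) (_ : Finite Γ) (_ : Nonempty Γ) (h : Γ → A) (r : TimedWord Γ → M),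
      QTLRecognizableBy val (fun T => P T) r ∧ ∀ w, 𝕃 w = pushQTL h r w

/-- Idempotency of a timed valuation monoid. -/
def IsIdempotent (M : Type) [Add M] : Prop := ∀ m : M, m + m = m

/-- Location-independence of a timed valuation function: the value of `val` on a non-empty
timed word over `M × M` depends only on the second components and the time stamps. -/
def LocIndep {M : Type} (val : List ((M × M) × ℝ≥0) → M) : Prop :=
  ∀ l l' : List ((M × M) × ℝ≥0), l ≠ [] →
    l.map (fun p => (p.1.2, p.2)) = l'.map (fun p => (p.1.2, p.2)) → val l = val l'

namespace SeqInter

variable {A M : Type}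

/-- Renaming of clocks in a clock constraint. -/
def cmap {C C' : Type} (f : C → C') : ClockConstraint C → ClockConstraint C'
  | .tt => .tt
  | .atom x op c => .atom (f x) op c
  | .conj φ ψ => .conj (cmap f φ) (cmap f ψ)

lemma sat_cmap {C C' : Type} (f : C → C') (φ : ClockConstraint C) (ν : ClockVal C') :
    (cmap f φ).Sat ν ↔ φ.Sat (fun x => ν (f x)) := by
  induction φ with
  | tt => simp [cmap, ClockConstraint.Sat]
  | atom x op c => simp [cmap, ClockConstraint.Sat]
  | conj φ ψ ihφ ihψ => simp [cmap, ClockConstraint.Sat, ihφ, ihψ]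

/-- Un-renaming along `Sum.inr`. -/
def unmapR {C1 C2 : Type} : ClockConstraint (C1 ⊕ C2) → ClockConstraint C2
  | .tt => .tt
  | .atom (Sum.inl _) _ _ => .tt
  | .atom (Sum.inr x) op c => .atom x op c
  | .conj φ ψ => .conj (unmapR φ) (unmapR ψ)

lemma unmapR_cmap {C1 C2 : Type} (g : ClockConstraint C2) :
    unmapR (C1 := C1) (cmap Sum.inr g) = g := by
  induction g with
  | tt => rfl
  | atom x op c => rfl
  | conj φ ψ ihφ ihψ => simp [cmap, unmapR, ihφ, ihψ]

/-- Product edge. -/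
def prodEdge {L1 L2 C1 C2 : Type} (e1 : Edge L1 A C1) (e2 : Edge L2 A C2) :
    Edge (L1 × L2) A (C1 ⊕ C2) where
  src := (e1.src, e2.src)
  label := e1.label
  guard := .conj (cmap Sum.inl e1.guard) (cmap Sum.inr e2.guard)
  reset := Sum.inl '' e1.reset ∪ Sum.inr '' e2.reset
  dst := (e1.dst, e2.dst)

def decodeGuard {C1 C2 : Type} : ClockConstraint (C1 ⊕ C2) → ClockConstraint C2
  | .conj _ ψ => unmapR ψ
  | g => unmapR g

/-- Decoding the second component of a product edge. -/
def decodeE {L1 L2 C1 C2 : Type} (e : Edge (L1 × L2) A (C1 ⊕ C2)) : Edge L2 A C2 where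
  src := e.src.2
  label := e.label
  guard := decodeGuard e.guard
  reset := Sum.inr ⁻¹' e.reset
  dst := e.dst.2

lemma decodeE_prodEdge {L1 L2 C1 C2 : Type} (e1 : Edge L1 A C1) (e2 : Edge L2 A C2)
    (h : e1.label = e2.label) : decodeE (prodEdge e1 e2) = e2 := by
  have hres : Sum.inr ⁻¹' (Sum.inl '' e1.reset ∪ Sum.inr '' e2.reset) = e2.reset := by
    ext x; simp
  cases e2 with
  | mk s lab g R d =>
    simp only [decodeE, prodEdge, decodeGuard, unmapR_cmap, Edge.mk.injEq] at *
    exact ⟨trivial, h, trivial, hres, trivial⟩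

/-- The product timed automaton. -/
def prodTA (T U : TimedAutomaton A) : TimedAutomaton A where
  L := T.L × U.L
  C := T.C ⊕ U.C
  finL := have := T.finL; have := U.finL; inferInstance
  finC := have := T.finC; have := U.finC; inferInstance
  I := T.I ×ˢ U.I
  F := T.F ×ˢ U.F
  E := { e | ∃ e1 ∈ T.E, ∃ e2 ∈ U.E, e1.label = e2.label ∧ e = prodEdge e1 e2 }
  finE := by
    apply Set.Finite.subset (Set.Finite.image2 prodEdge T.finE U.finE)
    rintro e ⟨e1, h1, e2, h2, _, rfl⟩
    exact Set.mem_image2_of_mem h1 h2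

lemma comp_inl_reset {C1 C2 : Type} (ν : ClockVal (C1 ⊕ C2)) (Λ1 : Set C1) (Λ2 : Set C2) :
    (fun x => (ν.reset (Sum.inl '' Λ1 ∪ Sum.inr '' Λ2)) (Sum.inl x))
      = ClockVal.reset (fun x => ν (Sum.inl x)) Λ1 := by
  funext x; simp [ClockVal.reset]

lemma comp_inr_reset {C1 C2 : Type} (ν : ClockVal (C1 ⊕ C2)) (Λ1 : Set C1) (Λ2 : Set C2) :
    (fun x => (ν.reset (Sum.inl '' Λ1 ∪ Sum.inr '' Λ2)) (Sum.inr x))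
      = ClockVal.reset (fun x => ν (Sum.inr x)) Λ2 := by
  funext x; simp [ClockVal.reset]

/-- Projection of runs of the product automaton. -/
lemma prod_run_proj (T U : TimedAutomaton A) :
    ∀ (w : List (A × ℝ≥0)) (ℓ : T.L × U.L) (ν : ClockVal (T.C ⊕ U.C))
      (es : List (Edge (T.L × U.L) A (T.C ⊕ U.C))),
      (prodTA T U).IsRunFrom ℓ ν w es →
      ∃ es1 es2, T.IsRunFrom ℓ.1 (fun x => ν (Sum.inl x)) w es1 ∧
        U.IsRunFrom ℓ.2 (fun x => ν (Sum.inr x)) w es2 ∧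
        es = List.zipWith prodEdge es1 es2
  | [], ℓ, ν, [] => by
    intro h
    have h' : ℓ ∈ T.F ×ˢ U.F := h
    exact ⟨[], [], h'.1, h'.2, rfl⟩
  | [], ℓ, ν, e :: es => by intro h; exact absurd h (by simp [TimedAutomaton.IsRunFrom])
  | (a, t) :: w, ℓ, ν, [] => by intro h; exact absurd h (by simp [TimedAutomaton.IsRunFrom])
  | (a, t) :: w, ℓ, ν, e :: es => by
    rintro ⟨hE, hsrc, hlab, hsat, hrest⟩
    obtain ⟨e1, h1, e2, h2, hlabeq, rfl⟩ := hE
    obtain ⟨hs1, hs2⟩ : e1.src = ℓ.1 ∧ e2.src = ℓ.2 := by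
      constructor <;> simp [← hsrc, prodEdge]
    have hg1' : (cmap Sum.inl e1.guard).Sat (ν.add t) := hsat.1
    have hg2' : (cmap Sum.inr e2.guard).Sat (ν.add t) := hsat.2
    rw [sat_cmap] at hg1' hg2'
    obtain ⟨es1, es2, hr1, hr2, rfl⟩ := prod_run_proj T U w (e1.dst, e2.dst)
      ((ν.add t).reset (prodEdge e1 e2).reset) es hrest
    rw [show (prodEdge e1 e2).reset = Sum.inl '' e1.reset ∪ Sum.inr '' e2.reset from rfl,
      comp_inl_reset] at hr1
    rw [show (prodEdge e1 e2).reset = Sum.inl '' e1.reset ∪ Sum.inr '' e2.reset from rfl,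
      comp_inr_reset] at hr2
    exact ⟨e1 :: es1, e2 :: es2, ⟨h1, hs1, hlab, hg1', hr1⟩,
      ⟨h2, hs2, hlabeq.symm.trans hlab, hg2', hr2⟩, rfl⟩

/-- Combination of runs into a run of the product automaton. -/
lemma prod_run_of (T U : TimedAutomaton A) :
    ∀ (w : List (A × ℝ≥0)) (ℓ1 : T.L) (ℓ2 : U.L) (ν : ClockVal (T.C ⊕ U.C))
      (es1 : List (Edge T.L A T.C)) (es2 : List (Edge U.L A U.C)),
      T.IsRunFrom ℓ1 (fun x => ν (Sum.inl x)) w es1 →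
      U.IsRunFrom ℓ2 (fun x => ν (Sum.inr x)) w es2 →
      (prodTA T U).IsRunFrom (ℓ1, ℓ2) ν w (List.zipWith prodEdge es1 es2)
  | [], ℓ1, ℓ2, ν, [], [] => by
    intro h1 h2
    exact show (ℓ1, ℓ2) ∈ T.F ×ˢ U.F from ⟨h1, h2⟩
  | [], _, _, _, [], _ :: _ => by intro _ h; exact absurd h (by simp [TimedAutomaton.IsRunFrom])
  | [], _, _, _, _ :: _, _ => by intro h _; exact absurd h (by simp [TimedAutomaton.IsRunFrom])
  | (a, t) :: w, _, _, _, [], _ => by intro h _; exact absurd h (by simp [TimedAutomaton.IsRunFrom])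
  | (a, t) :: w, _, _, _, _ :: _, [] => by intro _ h; exact absurd h (by simp [TimedAutomaton.IsRunFrom])
  | (a, t) :: w, ℓ1, ℓ2, ν, e1 :: es1, e2 :: es2 => by
    rintro ⟨hE1, hs1, hl1, hg1, hr1⟩ ⟨hE2, hs2, hl2, hg2, hr2⟩
    refine ⟨⟨e1, hE1, e2, hE2, hl1.trans hl2.symm, rfl⟩, by simp [prodEdge, hs1, hs2]; rfl, hl1, ?_, ?_⟩
    · exact ⟨(sat_cmap _ _ _).2 hg1, (sat_cmap _ _ _).2 hg2⟩
    · exact prod_run_of T U w e1.dst e2.dst ((ν.add t).reset (prodEdge e1 e2).reset) es1 es2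
        (by rw [show (prodEdge e1 e2).reset = Sum.inl '' e1.reset ∪ Sum.inr '' e2.reset from rfl,
          comp_inl_reset]; exact hr1)
        (by rw [show (prodEdge e1 e2).reset = Sum.inl '' e1.reset ∪ Sum.inr '' e2.reset from rfl,
          comp_inr_reset]; exact hr2)

/-- Runs of a sequential automaton are unique. -/
lemma seq_run_unique (T : TimedAutomaton A) (hseq : T.Sequential) :
    ∀ (w : List (A × ℝ≥0)) (ℓ : T.L) (ν : ClockVal T.C) es es',
      T.IsRunFrom ℓ ν w es → T.IsRunFrom ℓ ν w es' → es = es'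
  | [], ℓ, ν, [], [] => by intros; rfl
  | [], _, _, [], _ :: _ => by intro _ h; exact absurd h (by simp [TimedAutomaton.IsRunFrom])
  | [], _, _, _ :: _, _ => by intro h _; exact absurd h (by simp [TimedAutomaton.IsRunFrom])
  | (a, t) :: w, _, _, [], _ => by intro h _; exact absurd h (by simp [TimedAutomaton.IsRunFrom])
  | (a, t) :: w, _, _, _ :: _, [] => by intro _ h; exact absurd h (by simp [TimedAutomaton.IsRunFrom])
  | (a, t) :: w, ℓ, ν, e :: es, e' :: es' => by
    rintro ⟨hE, hs, hl, hg, hrest⟩ ⟨hE', hs', hl', hg', hrest'⟩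
    have he : e = e' := hseq.2 e hE e' hE' (hs.trans hs'.symm) (hl.trans hl'.symm)
    subst he
    rw [seq_run_unique T hseq w e.dst _ es es' hrest hrest']

lemma prod_sequential {T U : TimedAutomaton A} (hT : T.Sequential) (hU : U.Sequential) :
    (prodTA T U).Sequential := by
  obtain ⟨ℓT, hℓT⟩ := hT.1
  obtain ⟨ℓU, hℓU⟩ := hU.1
  constructor
  · exact ⟨(ℓT, ℓU), by simp [prodTA, hℓT, hℓU, Set.singleton_prod_singleton]; rfl⟩
  · rintro _ ⟨e1, h1, e2, h2, hl, rfl⟩ _ ⟨e1', h1', e2', h2', hl', rfl⟩ hsrc hlab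
    have hs1 : e1.src = e1'.src := congrArg Prod.fst hsrc
    have hs2 : e2.src = e2'.src := congrArg Prod.snd hsrc
    have hl1 : e1.label = e1'.label := hlab
    have he1 : e1 = e1' := hT.2 e1 h1 e1' h1' hs1 hl1
    have he2 : e2 = e2' := hU.2 e2 h2 e2' h2' hs2 (by rw [← hl, ← hl', hl1])
    rw [he1, he2]

/-- The product weighted timed automaton. -/
def prodWTA (T : TimedAutomaton A) (W : WTA A M) : WTA A M where
  toTimedAutomaton := prodTA T W.toTimedAutomaton
  wtL := fun p => W.wtL p.2
  wtE := fun e => W.wtE (decodeE e)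

lemma prod_runWord (T : TimedAutomaton A) (W : WTA A M) :
    ∀ (w : List (A × ℝ≥0)) (ℓ1 : T.L) (ν1 : ClockVal T.C) (es1 : List (Edge T.L A T.C))
      (ℓ2 : W.L) (ν2 : ClockVal W.C) (es2 : List (Edge W.L A W.C)),
      T.IsRunFrom ℓ1 ν1 w es1 → W.toTimedAutomaton.IsRunFrom ℓ2 ν2 w es2 →
      (prodWTA T W).runWord w (List.zipWith prodEdge es1 es2) = W.runWord w es2
  | [], _, _, _, _, _, _ => by intros; rfl
  | (a, t) :: w, _, _, [], _, _, _ => by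
      intro h _; exact absurd h (by simp [TimedAutomaton.IsRunFrom])
  | (a, t) :: w, _, _, _ :: _, _, _, [] => by
      intro _ h; exact absurd h (by simp [TimedAutomaton.IsRunFrom])
  | (a, t) :: w, ℓ1, ν1, e1 :: es1, ℓ2, ν2, e2 :: es2 => by
    rintro ⟨hE1, hs1, hl1, hg1, hr1⟩ ⟨hE2, hs2, hl2, hg2, hr2⟩
    have ih := prod_runWord T W w e1.dst _ es1 e2.dst _ es2 hr1 hr2
    simp only [WTA.runWord, List.zipWith] at ih ⊢
    rw [ih]
    congr 1
    rw [show (prodWTA T W).wtE (prodEdge e1 e2)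
        = W.wtE (decodeE (prodEdge e1 e2)) from rfl,
      decodeE_prodEdge e1 e2 (hl1.trans hl2.symm)]
    rfl

end SeqInter

/-- If `𝓛 ⊆ 𝕋Σ⁺` is a sequentially recognizable timed language and
`r : 𝕋Σ⁺ → M` is a sequentially recognizable quantitative timed language over a timed
valuation monoid `𝕄`, then `r ∩ 𝓛` is sequentially recognizable over `𝕄`. -/
theorem interQTL_sequentially_recognizable {S M : Type} [Finite S] [Nonempty S]
    [AddCommMonoid M] (val : List ((M × M) × ℝ≥0) → M)
    (𝓛 : Set (TimedWord S)) (h𝓛 : TLRecognizableBy TimedAutomaton.Sequential 𝓛)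
    (r : TimedWord S → M)
    (hr : QTLRecognizableBy val TimedAutomaton.Sequential r) :
    QTLRecognizableBy val TimedAutomaton.Sequential (interQTL r 𝓛) := by
  obtain ⟨T, hTseq, hTlang⟩ := h𝓛
  obtain ⟨W, hWseq, hWbeh⟩ := hr
  refine ⟨SeqInter.prodWTA T W, SeqInter.prod_sequential hTseq hWseq, fun w => ?_⟩
  -- characterize the runs of the product
  have hzero_l : (fun x => (ClockVal.zero : ClockVal (T.C ⊕ W.C)) (Sum.inl x))
      = (ClockVal.zero : ClockVal T.C) := rfl
  have hzero_r : (fun x => (ClockVal.zero : ClockVal (T.C ⊕ W.C)) (Sum.inr x))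
      = (ClockVal.zero : ClockVal W.C) := rfl
  have hrun_iff : ∀ es, es ∈ (SeqInter.prodWTA T W).toTimedAutomaton.RunOn w ↔
      ∃ es1 ∈ T.RunOn w, ∃ es2 ∈ W.toTimedAutomaton.RunOn w,
        es = List.zipWith SeqInter.prodEdge es1 es2 := by
    intro es
    constructor
    · rintro ⟨ℓ0, hI, hrun⟩
      obtain ⟨hI1, hI2⟩ := Set.mem_prod.1 hI
      obtain ⟨es1, es2, h1, h2, rfl⟩ :=
        SeqInter.prod_run_proj T W.toTimedAutomaton w.1 ℓ0 ClockVal.zero es hrun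
      rw [hzero_l] at h1; rw [hzero_r] at h2
      exact ⟨es1, ⟨ℓ0.1, hI1, h1⟩, es2, ⟨ℓ0.2, hI2, h2⟩, rfl⟩
    · rintro ⟨es1, ⟨ℓ1, hI1, h1⟩, es2, ⟨ℓ2, hI2, h2⟩, rfl⟩
      refine ⟨(ℓ1, ℓ2), Set.mem_prod.2 ⟨hI1, hI2⟩, ?_⟩
      exact SeqInter.prod_run_of T W.toTimedAutomaton w.1 ℓ1 ℓ2 ClockVal.zero es1 es2
        (by rw [hzero_l]; exact h1) (by rw [hzero_r]; exact h2)
  by_cases hT : (T.RunOn w).Nonempty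
  · obtain ⟨es1, hes1⟩ := hT
    have hw𝓛 : w ∈ 𝓛 := by rw [← hTlang]; exact ⟨es1, hes1⟩
    by_cases hW : (W.toTimedAutomaton.RunOn w).Nonempty
    · obtain ⟨es2, hes2⟩ := hW
      -- the product has exactly one run
      have hWrun : W.toTimedAutomaton.RunOn w = {es2} := by
        apply Set.eq_singleton_iff_unique_mem.2 ⟨hes2, fun es' hes' => ?_⟩
        obtain ⟨ℓ, hI, h⟩ := hes'
        obtain ⟨ℓ', hI', h'⟩ := hes2
        obtain ⟨ℓ0, hℓ0⟩ := hWseq.1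
        have : ℓ = ℓ' := by
          rw [hℓ0] at hI hI'; rw [Set.mem_singleton_iff.1 hI, Set.mem_singleton_iff.1 hI']
        subst this
        exact SeqInter.seq_run_unique W.toTimedAutomaton hWseq w.1 ℓ ClockVal.zero es' es2 h h'
      have hTrun : T.RunOn w = {es1} := by
        apply Set.eq_singleton_iff_unique_mem.2 ⟨hes1, fun es' hes' => ?_⟩
        obtain ⟨ℓ, hI, h⟩ := hes'
        obtain ⟨ℓ', hI', h'⟩ := hes1
        obtain ⟨ℓ0, hℓ0⟩ := hTseq.1
        have : ℓ = ℓ' := by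
          rw [hℓ0] at hI hI'; rw [Set.mem_singleton_iff.1 hI, Set.mem_singleton_iff.1 hI']
        subst this
        exact SeqInter.seq_run_unique T hTseq w.1 ℓ ClockVal.zero es' es1 h h'
      have hProdrun : (SeqInter.prodWTA T W).toTimedAutomaton.RunOn w
          = {(List.zipWith SeqInter.prodEdge es1 es2 :
            List (Edge (SeqInter.prodWTA T W).L S (SeqInter.prodWTA T W).C))} := by
        ext es
        rw [hrun_iff es, hTrun, hWrun]
        simp
        exact Iff.rfl
      have h1 : ∃ ℓ ∈ T.I, T.IsRunFrom ℓ ClockVal.zero w.1 es1 := hes1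
      have h2 : ∃ ℓ ∈ W.I, W.toTimedAutomaton.IsRunFrom ℓ ClockVal.zero w.1 es2 := hes2
      obtain ⟨ℓ1, _, hrun1⟩ := h1
      obtain ⟨ℓ2, _, hrun2⟩ := h2
      have hword := SeqInter.prod_runWord T W w.1 ℓ1 ClockVal.zero es1 ℓ2 ClockVal.zero es2
        hrun1 hrun2
      rw [interQTL, if_pos hw𝓛, ← hWbeh w]
      unfold WTA.behavior
      rw [hProdrun, hWrun, finsum_mem_singleton, finsum_mem_singleton, hword]
    · -- w ∈ 𝓛 but r w = 0
      have hWrun : W.toTimedAutomaton.RunOn w = ∅ := Set.not_nonempty_iff_eq_empty.1 hW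
      have hProdrun : (SeqInter.prodWTA T W).toTimedAutomaton.RunOn w = ∅ := by
        ext es
        rw [hrun_iff es, hWrun]
        simp
      rw [interQTL, if_pos hw𝓛, ← hWbeh w]
      unfold WTA.behavior
      rw [hProdrun, hWrun, finsum_mem_empty, finsum_mem_empty]
  · have hw𝓛 : w ∉ 𝓛 := by rw [← hTlang]; exact fun h => hT h
    have hTrun : T.RunOn w = ∅ := Set.not_nonempty_iff_eq_empty.1 hT
    have hProdrun : (SeqInter.prodWTA T W).toTimedAutomaton.RunOn w = ∅ := by
      ext es
      rw [hrun_iff es, hTrun]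
      simp
    rw [interQTL, if_neg hw𝓛]
    unfold WTA.behavior
    rw [hProdrun, finsum_mem_empty]
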